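/- Let Λ be a commutative local uniserial ring of length n with radical generator p. Let (B;A) be a pair with B finitely generated, p²A = 0, and soc B ⊆ A. Suppose B = ⊕_{i=1}^s B_i is a decomposition such that rad A = ⊕_i (rad A ∩ B_i). Then A = ⊕_i (A ∩ B_i), i.e. the pair (B;A) decomposes as ⊕_i (B_i; A ∩ B_i). -/

import Mathlib

/-- Uniqueness of components: if a finite sum of elements of an independent family of
submodules vanishes, each summand vanishes. -/
lemma aux_sum_eq_zero {Λ B : Type} [CommRing Λ] [AddCommGroup B] [Module Λ B]
    {s : ℕ} {Bi : Fin s → Submodule Λ B} (hindep : iSupIndep Bi)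
    (x : ∀ i, B) (hx : ∀ i, x i ∈ Bi i) (h0 : ∑ i, x i = 0) : ∀ i, x i = 0 := by
  classical
  have hinj := hindep.dfinsupp_lsum_injective
  set f : Π₀ i, Bi i := DFinsupp.equivFunOnFintype.symm fun i => (⟨x i, hx i⟩ : Bi i) with hf
  have hsum : (DFinsupp.lsum ℕ fun i => (Bi i).subtype) f
      = (DFinsupp.lsum ℕ fun i => (Bi i).subtype) 0 := by
    rw [map_zero, DFinsupp.lsum_apply_apply, DFinsupp.sumAddHom_apply,
      DFinsupp.sum_eq_sum_fintype]
    · simpa [hf, DFinsupp.equivFunOnFintype] using h0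
    · intro i; simp
  have hf0 : f = 0 := hinj hsum
  intro i
  have hfi : f i = 0 := by rw [hf0]; rfl
  have := congrArg Subtype.val hfi
  simpa [hf, DFinsupp.equivFunOnFintype] using this

/-- Over a commutative local uniserial ring `Λ` of length `n`, let `(B;A)` be
a pair with `B` finitely generated, `p²A = 0` and `soc B ⊆ A`.  If `B = ⊕ᵢ Bᵢ` is a
decomposition (an independent family of submodules with sup `⊤`) such that
`rad A = ⊕ᵢ (rad A ∩ Bᵢ)`, then `A = ⊕ᵢ (A ∩ Bᵢ)`. -/
theorem decomposition_lifts_from_radA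
    (Λ : Type) [CommRing Λ] [IsLocalRing Λ] (p : Λ) (n : ℕ)
    (hmax : IsLocalRing.maximalIdeal Λ = Ideal.span {p})
    (huni : ∀ I J : Ideal Λ, I ≤ J ∨ J ≤ I)
    (hlen : p ^ n = 0) (hlen' : p ^ (n - 1) ≠ 0)
    (B : Type) [AddCommGroup B] [Module Λ B] [Module.Finite Λ B]
    (A : Submodule Λ B) (hp2A : ∀ a ∈ A, p ^ 2 • a = 0)
    (hsoc : LinearMap.ker (LinearMap.lsmul Λ B p) ≤ A)
    (s : ℕ) (Bi : Fin s → Submodule Λ B)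
    (hindep : iSupIndep Bi) (hsup : ⨆ i, Bi i = ⊤)
    (hrad : A.map (LinearMap.lsmul Λ B p)
      = ⨆ i, (A.map (LinearMap.lsmul Λ B p) ⊓ Bi i)) :
    A = ⨆ i, (A ⊓ Bi i) := by
  classical
  -- Key fact: if p • b ∈ pA then b ∈ A (using soc B ≤ A).
  have key : ∀ b : B, p • b ∈ A.map (LinearMap.lsmul Λ B p) → b ∈ A := by
    rintro b hb
    obtain ⟨a, ha, hab⟩ := hb
    have : p • (b - a) = 0 := by
      simp only [LinearMap.lsmul_apply] at hab
      rw [smul_sub, hab, sub_self]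
    have hker : b - a ∈ LinearMap.ker (LinearMap.lsmul Λ B p) := by
      simpa [LinearMap.mem_ker] using this
    have hba : b - a ∈ A := hsoc hker
    simpa using A.add_mem hba ha
  apply le_antisymm
  · intro a ha
    -- decompose a along Bi
    have hatop : a ∈ ⨆ i, Bi i := by rw [hsup]; trivial
    rw [Submodule.mem_iSup_iff_exists_finsupp] at hatop
    obtain ⟨x, hx, hxa⟩ := hatop
    have hxa' : ∑ i, x i = a := by
      rw [← hxa, Finsupp.sum_fintype]; intro i; rfl
    -- p • a lies in rad A = ⨆ (rad A ⊓ Bi)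
    have hpa : p • a ∈ ⨆ i, (A.map (LinearMap.lsmul Λ B p) ⊓ Bi i) := by
      rw [← hrad]; exact ⟨a, ha, rfl⟩
    rw [Submodule.mem_iSup_iff_exists_finsupp] at hpa
    obtain ⟨y, hy, hya⟩ := hpa
    have hya' : ∑ i, y i = p • a := by
      rw [← hya, Finsupp.sum_fintype]; intro i; rfl
    -- componentwise equality p • x i = y i
    have hcomp : ∀ i, p • x i - y i = 0 := by
      apply aux_sum_eq_zero hindep
      · intro i
        exact (Bi i).sub_mem ((Bi i).smul_mem p (hx i)) (hy i).2
      · rw [Finset.sum_sub_distrib, ← Finset.smul_sum, hxa', hya', sub_self]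
    -- hence each x i ∈ A
    have hxA : ∀ i, x i ∈ A := by
      intro i
      apply key
      have hpx : p • x i = y i := sub_eq_zero.mp (hcomp i)
      rw [hpx]
      exact (hy i).1
    rw [← hxa']
    exact Submodule.sum_mem _ fun i _ => Submodule.mem_iSup_of_mem i ⟨hxA i, hx i⟩
  · exact iSup_le fun i => inf_le_left
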